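/- (Completion of squares telescoping identity.) Under the setup of the adjoint recursion (P solving the Riccati identity, q_k = Px_k - μ_k = Gᵀq_{k+1}, x_{k+1} = Ax_k + Bv_k, v_k = -R⁻¹Bᵀμ_{k+1} - R⁻¹Sᵀx_k), the following holds for each k: x_kᵀ(Q - SR⁻¹Sᵀ)x_k + (v_k + R⁻¹Sᵀx_k)ᵀ R (v_k + R⁻¹Sᵀx_k) = x_kᵀPx_k - x_{k+1}ᵀPx_{k+1} + x_{k+1}ᵀq_{k+1} - x_kᵀq_k. -/
import Mathlib


open Matrix

private lemma aux_dot_18 {m n : Type*} [Fintype m] [Fintype n]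
    (M : Matrix m n ℝ) (u : m → ℝ) (w : n → ℝ) :
    M.mulVec w ⬝ᵥ u = w ⬝ᵥ Mᵀ.mulVec u := by
  rw [dotProduct_mulVec, vecMul_transpose]

/-- Completion-of-squares telescoping identity in the preview LQR proof. -/
theorem stmt_18 (n p : ℕ) (A Q P : Matrix (Fin n) (Fin n) ℝ)
    (B S : Matrix (Fin n) (Fin p) ℝ) (R : Matrix (Fin p) (Fin p) ℝ)
    (hR : R.PosDef) (hP : P.PosDef)
    (hRic : (A - B * R⁻¹ * Sᵀ)ᵀ * P * (1 + B * R⁻¹ * Bᵀ * P)⁻¹ * (A - B * R⁻¹ * Sᵀ) +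
        Q - S * R⁻¹ * Sᵀ = P)
    (x μ : ℕ → Fin n → ℝ) (v : ℕ → Fin p → ℝ)
    (hx : ∀ k, x (k + 1) = A.mulVec (x k) + B.mulVec (v k))
    (hμ : ∀ k, μ k = Aᵀ.mulVec (μ (k + 1)) + Q.mulVec (x k) + S.mulVec (v k))
    (hv : ∀ k, v k = -(R⁻¹ * Bᵀ).mulVec (μ (k + 1)) - (R⁻¹ * Sᵀ).mulVec (x k))
    (q : ℕ → Fin n → ℝ) (hq : ∀ k, q k = P.mulVec (x k) - μ k) :
    ∀ k, x k ⬝ᵥ (Q - S * R⁻¹ * Sᵀ).mulVec (x k) +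
        (v k + (R⁻¹ * Sᵀ).mulVec (x k)) ⬝ᵥ
          R.mulVec (v k + (R⁻¹ * Sᵀ).mulVec (x k)) =
      x k ⬝ᵥ P.mulVec (x k) - x (k + 1) ⬝ᵥ P.mulVec (x (k + 1)) +
        x (k + 1) ⬝ᵥ q (k + 1) - x k ⬝ᵥ q k := by
  intro k
  have hRT : Rᵀ = R := by simpa using hR.isHermitian.eq
  have hRinv : R * R⁻¹ = 1 := mul_nonsing_inv _ hR.det_pos.ne'.isUnit
  have hRinv' : R⁻¹ * R = 1 := nonsing_inv_mul _ hR.det_pos.ne'.isUnit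
  have hRinvT : (R⁻¹)ᵀ = R⁻¹ := by rw [transpose_nonsing_inv, hRT]
  have hw : v k + (R⁻¹ * Sᵀ).mulVec (x k) = -((R⁻¹ * Bᵀ).mulVec (μ (k + 1))) := by
    rw [hv k]; abel
  have hRw : R.mulVec (v k + (R⁻¹ * Sᵀ).mulVec (x k)) = -(Bᵀ.mulVec (μ (k + 1))) := by
    rw [hw, mulVec_neg, mulVec_mulVec, ← Matrix.mul_assoc, hRinv, Matrix.one_mul]
  have h2 : (R⁻¹ * Sᵀ).mulVec (x k) ⬝ᵥ R.mulVec (v k + (R⁻¹ * Sᵀ).mulVec (x k)) =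
      x k ⬝ᵥ S.mulVec (v k) + x k ⬝ᵥ (S * R⁻¹ * Sᵀ).mulVec (x k) := by
    rw [aux_dot_18, mulVec_mulVec, transpose_mul, transpose_transpose, hRinvT,
      Matrix.mul_assoc S, hRinv', Matrix.mul_one, mulVec_add, dotProduct_add, mulVec_mulVec, ← Matrix.mul_assoc]
  have h3 : v k ⬝ᵥ R.mulVec (v k + (R⁻¹ * Sᵀ).mulVec (x k)) =
      -(v k ⬝ᵥ Bᵀ.mulVec (μ (k + 1))) := by
    rw [hRw, dotProduct_neg]
  have h4 : x k ⬝ᵥ μ k = A.mulVec (x k) ⬝ᵥ μ (k + 1) + x k ⬝ᵥ Q.mulVec (x k) +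
      x k ⬝ᵥ S.mulVec (v k) := by
    rw [hμ k, dotProduct_add, dotProduct_add, ← aux_dot_18]
  have h5 : x (k + 1) ⬝ᵥ μ (k + 1) = A.mulVec (x k) ⬝ᵥ μ (k + 1) +
      v k ⬝ᵥ Bᵀ.mulVec (μ (k + 1)) := by
    rw [hx k, add_dotProduct, aux_dot_18 B]
  rw [hq k, hq (k + 1), dotProduct_sub, dotProduct_sub, sub_mulVec, dotProduct_sub,
    add_dotProduct, h2, h3]
  linarith [h4, h5]
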